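/- For every integer n ≥ 1, the polynomials num_B(n,x) and den_B(n,x) are coprime in ℤ[x], i.e. gcd(num_B(n,x), den_B(n,x)) = 1. -/

import Mathlib

open Polynomial Finset
open scoped Classical

/-- The binary partitions of `n`: partitions of `n` all of whose parts are powers of `2`. -/
noncomputable def binParts (n : ℕ) : Finset (Nat.Partition n) :=
  Finset.univ.filter (fun μ => ∀ i ∈ μ.parts, ∃ k : ℕ, i = 2 ^ k)

/-- `h_{B,λ}(x) = ∏_{k ≥ 0, 2^k ≤ n} (1+x^{2^k})^(⌊n/2^k⌋ - m_λ(2^k))` in `ℤ[x]`. -/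
noncomputable def hB (n : ℕ) (μ : Nat.Partition n) : Polynomial ℤ :=
  ∏ k ∈ (Finset.range (n + 1)).filter (fun k => 2 ^ k ≤ n),
    (1 + X ^ (2 ^ k)) ^ (n / 2 ^ k - μ.parts.count (2 ^ k))

/-- `G_B(n,x)`: the (normalized) gcd of the `h_{B,λ}(x)` over binary partitions `λ` of `n`. -/
noncomputable def GB (n : ℕ) : Polynomial ℤ :=
  (binParts n).gcd (hB n)

theorem GB_dvd_sum (n : ℕ) :
    ∃ q : Polynomial ℤ, (∑ μ ∈ binParts n, hB n μ) = GB n * q :=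
  exists_eq_mul_right_of_dvd (Finset.dvd_sum fun _ hμ => Finset.gcd_dvd hμ)

/-- `num_B(n,x) = (∑_{λ binary partition of n} h_{B,λ}(x)) / G_B(n,x)`. -/
noncomputable def numB (n : ℕ) : Polynomial ℤ :=
  (GB_dvd_sum n).choose

/-- The all-ones partition of `n`. -/
def onesPartition (n : ℕ) : Nat.Partition n :=
  Nat.Partition.ofSums n (Multiset.replicate n 1) (by simp)

theorem onesPartition_mem_binParts (n : ℕ) : onesPartition n ∈ binParts n := by
  simp only [binParts, Finset.mem_filter, Finset.mem_univ, true_and]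
  intro i hi
  have h1 : i = 1 := by
    rw [onesPartition, Nat.Partition.ofSums_parts] at hi
    exact Multiset.eq_of_mem_replicate (Multiset.mem_filter.mp hi).1
  exact ⟨0, by simp [h1]⟩

theorem GB_dvd_prod (n : ℕ) :
    ∃ q : Polynomial ℤ,
      (∏ k ∈ (Finset.range (n + 1)).filter (fun k => 2 ^ k ≤ n),
          ((1 : Polynomial ℤ) + X ^ (2 ^ k)) ^ (n / 2 ^ k)) = GB n * q :=
  exists_eq_mul_right_of_dvd <|
    dvd_trans (Finset.gcd_dvd (onesPartition_mem_binParts n))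
      (Finset.prod_dvd_prod_of_dvd _ _ fun _ _ => pow_dvd_pow _ (Nat.sub_le _ _))

/-- `den_B(n,x) = (∏_{k ≥ 0, 2^k ≤ n} (1+x^{2^k})^⌊n/2^k⌋) / G_B(n,x)`. -/
noncomputable def denB (n : ℕ) : Polynomial ℤ :=
  (GB_dvd_prod n).choose

section Aux
open Complex

lemma aux_parts_sum (n : ℕ) (μ : Nat.Partition n) (hμ : μ ∈ binParts n) :
    ∑ j ∈ (Finset.range (n + 1)).filter (fun j => 2 ^ j ≤ n),
      2 ^ j * μ.parts.count (2 ^ j) = n := by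
  classical
  have hbin : ∀ i ∈ μ.parts, ∃ c : ℕ, i = 2 ^ c := (Finset.mem_filter.mp hμ).2
  have hsum : μ.parts.sum = n := μ.parts_sum
  have h1 : μ.parts.sum = ∑ a ∈ μ.parts.toFinset, μ.parts.count a • a := by
    conv_lhs => rw [← Multiset.toFinset_sum_count_nsmul_eq μ.parts]
    rw [Multiset.sum_sum]
    simp [Multiset.nsmul_singleton, Multiset.sum_replicate, smul_eq_mul]
  have hsub : μ.parts.toFinset ⊆
      ((Finset.range (n + 1)).filter (fun j => 2 ^ j ≤ n)).image (fun j => 2 ^ j) := by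
    intro a ha
    have ham := Multiset.mem_toFinset.mp ha
    obtain ⟨c, rfl⟩ := hbin a ham
    have hle : 2 ^ c ≤ n := by
      have := Multiset.single_le_sum (fun x _ => Nat.zero_le x) _ ham
      omega
    refine Finset.mem_image.mpr ⟨c, Finset.mem_filter.mpr ⟨Finset.mem_range.mpr ?_, hle⟩, rfl⟩
    have := @Nat.lt_two_pow_self c
    omega
  have h2 : ∑ a ∈ μ.parts.toFinset, μ.parts.count a * a =
      ∑ a ∈ ((Finset.range (n + 1)).filter (fun j => 2 ^ j ≤ n)).image (fun j => 2 ^ j),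
        μ.parts.count a * a := by
    refine Finset.sum_subset hsub (fun a _ ha => ?_)
    rw [Multiset.count_eq_zero.mpr (fun hmem => ha (Multiset.mem_toFinset.mpr hmem)), zero_mul]
  have hinj : Set.InjOn (fun j : ℕ => 2 ^ j)
      ((Finset.range (n + 1)).filter (fun j => 2 ^ j ≤ n)) := fun a _ b _ h =>
    Nat.pow_right_injective (le_refl 2) h
  rw [Finset.sum_image hinj] at h2  -- maybe sum_image needs ∀ distinct; check
  calc ∑ j ∈ (Finset.range (n + 1)).filter (fun j => 2 ^ j ≤ n), 2 ^ j * μ.parts.count (2 ^ j)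
      = ∑ j ∈ (Finset.range (n + 1)).filter (fun j => 2 ^ j ≤ n),
          μ.parts.count (2 ^ j) * 2 ^ j := by simp [mul_comm]
    _ = ∑ a ∈ μ.parts.toFinset, μ.parts.count a * a := h2.symm
    _ = n := by
        have h3 : (∑ a ∈ μ.parts.toFinset, μ.parts.count a * a) = μ.parts.sum := by
          rw [h1]; simp [smul_eq_mul]
        rw [h3, hsum]

end Aux

section Aux2
open Complex

/-- the partition with ⌊n/2^k⌋ parts 2^k and (n % 2^k) parts 1 -/
noncomputable def partStar (n k : ℕ) : Nat.Partition n where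
  parts := Multiset.replicate (n / 2 ^ k) (2 ^ k) + Multiset.replicate (n % 2 ^ k) 1
  parts_pos := by
    intro i hi
    rcases Multiset.mem_add.mp hi with h | h
    · rw [Multiset.eq_of_mem_replicate h]; positivity
    · rw [Multiset.eq_of_mem_replicate h]; norm_num
  parts_sum := by
    rw [Multiset.sum_add, Multiset.sum_replicate, Multiset.sum_replicate]
    simp only [smul_eq_mul, mul_one]
    have h1 := Nat.div_add_mod n (2 ^ k)
    have h2 : n / 2 ^ k * 2 ^ k = 2 ^ k * (n / 2 ^ k) := Nat.mul_comm _ _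
    omega

lemma partStar_mem (n k : ℕ) : partStar n k ∈ binParts n := by
  simp only [binParts, Finset.mem_filter, Finset.mem_univ, true_and]
  intro i hi
  rcases Multiset.mem_add.mp hi with h | h
  · exact ⟨k, Multiset.eq_of_mem_replicate h⟩
  · exact ⟨0, by rw [Multiset.eq_of_mem_replicate h]; norm_num⟩

lemma partStar_count (n k : ℕ) : (partStar n k).parts.count (2 ^ k) = n / 2 ^ k := by
  simp only [partStar, Multiset.count_add, Multiset.count_replicate_self,
    Multiset.count_replicate]
  split_ifs with h
  · have hk : k = 0 := by
      by_contra hk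
      have h2 : (1:ℕ) < 2 ^ k := by
        calc 1 < 2 := one_lt_two
        _ ≤ 2 ^ k := Nat.le_self_pow hk 2
      omega
    subst hk
    simp [Nat.mod_one]
  · simp

end Aux2

section Aux3
open Complex

lemma aux_one_add_exp (θ : ℝ) :
    1 + Complex.exp (↑θ * I) =
      ↑(2 * Real.cos (θ / 2)) * Complex.exp (↑(θ / 2) * I) := by
  push_cast
  rw [Complex.two_cos, add_mul, ← Complex.exp_add, ← Complex.exp_add,
    show (-(↑θ/2 : ℂ) * I + ↑θ/2 * I) = 0 by ring,
    show ((↑θ/2 : ℂ) * I + ↑θ/2 * I) = ↑θ * I by ring, Complex.exp_zero, add_comm]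

lemma aux_polar_prod {s : Finset ℕ} {f : ℕ → ℂ} {ρ ψ : ℕ → ℝ}
    (h : ∀ j ∈ s, f j = (ρ j : ℂ) * Complex.exp ((ψ j : ℝ) * I)) :
    ∏ j ∈ s, f j = ((∏ j ∈ s, ρ j : ℝ) : ℂ) * Complex.exp (((∑ j ∈ s, ψ j : ℝ)) * I) := by
  rw [Finset.prod_congr rfl h, Finset.prod_mul_distrib, ← Complex.exp_sum]
  push_cast
  rw [Finset.sum_mul]

lemma aux_zeta_pow (k j : ℕ) :
    (Complex.exp ((Real.pi / 2^k : ℝ) * I)) ^ (2^j) =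
      Complex.exp ((Real.pi * 2^j / 2^k : ℝ) * I) := by
  rw [← Complex.exp_nat_mul]
  congr 1
  push_cast
  ring

lemma aux_zeta_pow_k (k : ℕ) :
    (Complex.exp ((Real.pi / 2^k : ℝ) * I)) ^ (2^k) = -1 := by
  rw [aux_zeta_pow k k, show (Real.pi * 2^k / 2^k : ℝ) = Real.pi by field_simp]
  exact Complex.exp_pi_mul_I

lemma aux_zeta_pow_gt (k j : ℕ) (hj : k < j) :
    (Complex.exp ((Real.pi / 2^k : ℝ) * I)) ^ (2^j) = 1 := by
  rw [show 2^j = 2^k * (2 * 2^(j-k-1)) by rw [← pow_succ', ← pow_add]; congr 1; omega,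
    pow_mul, aux_zeta_pow_k, pow_mul]
  norm_num

/-- the common rotation angle -/
noncomputable def auxPhi (n k : ℕ) : ℝ :=
  ∑ j ∈ ((Finset.range (n+1)).filter (fun j => 2^j ≤ n)).filter (fun j => j < k),
    (n / 2 ^ j : ℕ) * (Real.pi * 2 ^ j / 2 ^ (k+1))

lemma term_polar (n k : ℕ) (hk : 2 ^ k ≤ n) (μ : Nat.Partition n) (hμ : μ ∈ binParts n) :
    ∃ ρ ψ : ℝ, 0 ≤ ρ ∧ |ψ| < Real.pi / 2 ∧
      (μ.parts.count (2 ^ k) = n / 2 ^ k → 0 < ρ) ∧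
      Complex.exp ((-auxPhi n k : ℝ) * I) *
        (Polynomial.aeval (Complex.exp ((Real.pi / 2 ^ k : ℝ) * I))) (hB n μ)
        = (ρ : ℂ) * Complex.exp ((ψ : ℝ) * I) := by
  classical
  set F := (Finset.range (n+1)).filter (fun j => 2^j ≤ n) with hF
  set ζ := Complex.exp ((Real.pi / 2 ^ k : ℝ) * I) with hζ
  have hkF : k ∈ F := by
    refine Finset.mem_filter.mpr ⟨Finset.mem_range.mpr ?_, hk⟩
    have := @Nat.lt_two_pow_self k
    omega
  have hps : ∑ j ∈ F, 2 ^ j * μ.parts.count (2 ^ j) = n := aux_parts_sum n μ hμ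
  have hmle : ∀ j ∈ F, μ.parts.count (2 ^ j) ≤ n / 2 ^ j := by
    intro j hj
    have hterm : 2 ^ j * μ.parts.count (2 ^ j) ≤ n := by
      have h0 : 2 ^ j * μ.parts.count (2 ^ j) ≤ ∑ j ∈ F, 2 ^ j * μ.parts.count (2 ^ j) := by
        exact Finset.single_le_sum (f := fun j => 2 ^ j * μ.parts.count (2 ^ j))
          (fun i _ => Nat.zero_le _) hj
      rw [hps] at h0
      exact h0
    rw [Nat.le_div_iff_mul_le (by positivity : 0 < 2 ^ j), mul_comm]
    exact hterm
  have hev : (Polynomial.aeval ζ) (hB n μ) =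
      ∏ j ∈ F, (1 + ζ ^ 2 ^ j) ^ (n / 2 ^ j - μ.parts.count (2 ^ j)) := by
    simp [hB, map_prod, hF]
  by_cases hc : μ.parts.count (2 ^ k) = n / 2 ^ k
  · -- alive case
    set m := fun j => μ.parts.count (2 ^ j) with hm
    set e := fun j => n / 2 ^ j - m j with hedef
    set c := fun j : ℕ => Real.pi * 2 ^ j / 2 ^ (k+1) with hcdef
    set ρf : ℕ → ℝ := fun j =>
      if j < k then (2 * Real.cos (c j)) ^ (e j) else if j = k then 1 else 2 ^ (e j) with hρf
    set ψf : ℕ → ℝ := fun j => if j < k then (e j : ℝ) * c j else 0 with hψf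
    have hcpos : ∀ j, j < k → 0 < 2 * Real.cos (c j) := by
      intro j hj
      have h1 : 0 < c j := by positivity
      have h2 : c j < Real.pi / 2 := by
        rw [hcdef]
        have h3 : (2:ℝ) ^ j < 2 ^ k := by
          exact_mod_cast Nat.pow_lt_pow_right (by norm_num) hj
        rw [div_lt_div_iff₀ (by positivity) (by norm_num)]
        rw [pow_succ]
        nlinarith [Real.pi_pos]
      have := Real.cos_pos_of_mem_Ioo (Set.mem_Ioo.mpr ⟨by linarith, h2⟩)
      linarith
    have hfac : ∀ j ∈ F, (1 + ζ ^ 2 ^ j) ^ (e j)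
        = (ρf j : ℂ) * Complex.exp ((ψf j : ℝ) * I) := by
      intro j hjF
      by_cases hjk : j < k
      · simp only [hρf, hψf, if_pos hjk]
        rw [hζ, aux_zeta_pow k j, aux_one_add_exp (Real.pi * 2 ^ j / 2 ^ k),
          show Real.pi * 2 ^ j / 2 ^ k / 2 = c j by rw [hcdef, pow_succ]; ring,
          mul_pow, ← Complex.exp_nat_mul]
        congr 1
        · push_cast; ring
        · congr 1; push_cast; ring
      · by_cases hjk2 : j = k
        · subst hjk2
          have he0 : e j = 0 := by rw [hedef]; simp [hm, hc]
          simp [hρf, hψf, he0, if_neg hjk]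
        · have hkj : k < j := by omega
          rw [hζ, aux_zeta_pow_gt k j hkj]
          simp only [hρf, hψf, if_neg hjk, if_neg hjk2]
          rw [show ((1:ℂ) + 1) = ((2:ℝ) : ℂ) by norm_num, ← Complex.ofReal_pow]
          simp
    have hρpos : ∀ j ∈ F, 0 < ρf j := by
      intro j _
      rw [hρf]
      by_cases hjk : j < k
      · simp only [if_pos hjk]
        exact pow_pos (hcpos j hjk) _
      · by_cases hjk2 : j = k
        · simp [hjk, hjk2]
        · simp only [if_neg hjk, if_neg hjk2]
          positivity
    refine ⟨∏ j ∈ F, ρf j, (∑ j ∈ F, ψf j) - auxPhi n k,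
      (Finset.prod_pos hρpos).le, ?_, fun _ => Finset.prod_pos hρpos, ?_⟩
    · -- angle bound
      have hΨ : ∑ j ∈ F, ψf j = ∑ j ∈ F.filter (fun j => j < k), (e j : ℝ) * c j :=
        (Finset.sum_filter (fun j => j < k) (fun j => (e j : ℝ) * c j)).symm
      have heq : (∑ j ∈ F, ψf j) - auxPhi n k
          = -∑ j ∈ F.filter (fun j => j < k), (m j : ℝ) * c j := by
        rw [hΨ, auxPhi, ← hF, ← Finset.sum_sub_distrib, ← Finset.sum_neg_distrib]
        refine Finset.sum_congr rfl (fun j hj => ?_)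
        have hjF : j ∈ F := (Finset.mem_filter.mp hj).1
        have : ((e j : ℝ)) = (n / 2 ^ j : ℕ) - (m j : ℝ) := by
          rw [hedef]
          have hmj : m j ≤ n / 2 ^ j := hmle j hjF
          push_cast [Nat.cast_sub hmj]
          ring
        rw [this]
        ring
      rw [heq, abs_neg]
      have hnonneg : 0 ≤ ∑ j ∈ F.filter (fun j => j < k), (m j : ℝ) * c j := by
        refine Finset.sum_nonneg (fun j _ => ?_)
        have h0 : 0 ≤ c j := by rw [hcdef]; positivity
        exact mul_nonneg (Nat.cast_nonneg _) h0
      rw [_root_.abs_of_nonneg hnonneg]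
      have hpsibar : ∑ j ∈ F.filter (fun j => j < k), (m j : ℝ) * c j
          = ((∑ j ∈ F.filter (fun j => j < k), 2 ^ j * m j : ℕ) : ℝ)
            * (Real.pi / 2 ^ (k+1)) := by
        push_cast
        rw [Finset.sum_mul]
        refine Finset.sum_congr rfl (fun j _ => ?_)
        rw [hcdef]
        ring
      have hle : (∑ j ∈ F.filter (fun j => j < k), 2 ^ j * m j) ≤ n % 2 ^ k := by
        have hsub : F.filter (fun j => j < k) ⊆ F.erase k := by
          intro j hj
          have h1 := Finset.mem_filter.mp hj
          exact Finset.mem_erase.mpr ⟨by omega, h1.1⟩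
        have h1 : (∑ j ∈ F.filter (fun j => j < k), 2 ^ j * m j)
            ≤ ∑ j ∈ F.erase k, 2 ^ j * m j := Finset.sum_le_sum_of_subset hsub
        have h2 : (∑ j ∈ F.erase k, 2 ^ j * m j) + 2 ^ k * m k = ∑ j ∈ F, 2 ^ j * m j :=
          Finset.sum_erase_add F _ hkF
        rw [hps] at h2
        have hck : m k = n / 2 ^ k := hc
        rw [hck] at h2
        have h4 := Nat.div_add_mod n (2 ^ k)
        omega
      rw [hpsibar]
      calc ((∑ j ∈ F.filter (fun j => j < k), 2 ^ j * m j : ℕ) : ℝ) * (Real.pi / 2 ^ (k+1))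
          ≤ ((n % 2 ^ k : ℕ) : ℝ) * (Real.pi / 2 ^ (k+1)) := by
            refine mul_le_mul_of_nonneg_right ?_ (by positivity)
            exact_mod_cast hle
        _ < ((2 ^ k : ℕ) : ℝ) * (Real.pi / 2 ^ (k+1)) := by
            refine mul_lt_mul_of_pos_right ?_ (by positivity)
            exact_mod_cast Nat.mod_lt n (by positivity)
        _ = Real.pi / 2 := by
            push_cast
            rw [pow_succ]
            field_simp
    · rw [hev, Finset.prod_congr rfl hfac, aux_polar_prod (fun j hj => rfl),
        show Complex.exp (((-auxPhi n k : ℝ) : ℂ) * I) *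
            (((∏ j ∈ F, ρf j : ℝ) : ℂ) * Complex.exp (((∑ j ∈ F, ψf j : ℝ) : ℂ) * I))
          = ((∏ j ∈ F, ρf j : ℝ) : ℂ) *
            (Complex.exp (((-auxPhi n k : ℝ) : ℂ) * I) *
              Complex.exp (((∑ j ∈ F, ψf j : ℝ) : ℂ) * I)) by ring,
        ← Complex.exp_add]
      congr 2
      push_cast
      ring
  · -- dead case
    refine ⟨0, 0, le_refl 0, by rw [abs_zero]; positivity, fun h => absurd h hc, ?_⟩
    rw [hev, Finset.prod_eq_zero hkF]
    · simp
    · rw [hζ, aux_zeta_pow_k]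
      have he : n / 2 ^ k - μ.parts.count (2 ^ k) ≠ 0 := by
        have := hmle k hkF
        omega
      simp [he]

end Aux3

section Aux4
open Complex

lemma aux_sum_ne (n k : ℕ) (hk : 2 ^ k ≤ n) :
    (Polynomial.aeval (Complex.exp ((Real.pi / 2 ^ k : ℝ) * I)))
      (∑ μ ∈ binParts n, hB n μ) ≠ 0 := by
  intro h0
  set ζ := Complex.exp ((Real.pi / 2 ^ k : ℝ) * I) with hζ
  have hsum0 : ∑ μ ∈ binParts n, (Polynomial.aeval ζ) (hB n μ) = 0 := by
    rw [← map_sum]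
    exact h0
  have hpos : 0 < (∑ μ ∈ binParts n,
      Complex.exp ((-auxPhi n k : ℝ) * I) * (Polynomial.aeval ζ) (hB n μ)).re := by
    rw [Complex.re_sum]
    refine Finset.sum_pos' ?_ ⟨partStar n k, partStar_mem n k, ?_⟩
    · intro μ hμ
      obtain ⟨ρ, ψ, hρ0, hψ, _, heq⟩ := term_polar n k hk μ hμ
      rw [heq, Complex.re_ofReal_mul, Complex.exp_ofReal_mul_I_re]
      have habs := abs_lt.mp hψ
      exact mul_nonneg hρ0 (Real.cos_nonneg_of_mem_Icc ⟨by linarith, by linarith⟩)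
    · obtain ⟨ρ, ψ, hρ0, hψ, hstrict, heq⟩ :=
        term_polar n k hk (partStar n k) (partStar_mem n k)
      rw [heq, Complex.re_ofReal_mul, Complex.exp_ofReal_mul_I_re]
      have habs := abs_lt.mp hψ
      have hcos := Real.cos_pos_of_mem_Ioo (Set.mem_Ioo.mpr ⟨habs.1, habs.2⟩)
      exact mul_pos (hstrict (partStar_count n k)) hcos
  have hzero : (∑ μ ∈ binParts n,
      Complex.exp ((-auxPhi n k : ℝ) * I) * (Polynomial.aeval ζ) (hB n μ)) = 0 := by
    rw [← Finset.mul_sum, hsum0, mul_zero]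
  rw [hzero] at hpos
  simp at hpos

end Aux4


open Complex in
/-- For every integer `n ≥ 1`, the polynomials `num_B(n,x)` and `den_B(n,x)` are coprime
in `ℤ[x]`, i.e. `gcd(num_B(n,x), den_B(n,x)) = 1`. -/
theorem gcd_numB_denB_eq_one (n : ℕ) (hn : 1 ≤ n) :
    gcd (numB n) (denB n) = 1 := by
  classical
  by_contra hne
  have hprodne : (∏ k ∈ (Finset.range (n + 1)).filter (fun k => 2 ^ k ≤ n),
      ((1 : Polynomial ℤ) + X ^ 2 ^ k) ^ (n / 2 ^ k)) ≠ 0 := by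
    rw [Finset.prod_ne_zero_iff]
    intro j _
    apply pow_ne_zero
    intro h
    have h2 := congrArg (fun p => Polynomial.eval 0 p) h
    have h3 : ((0:ℤ)) ^ (2 ^ j) = 0 := zero_pow (by positivity)
    simp [h3] at h2
  have hspec : (∏ k ∈ (Finset.range (n + 1)).filter (fun k => 2 ^ k ≤ n),
      ((1 : Polynomial ℤ) + X ^ 2 ^ k) ^ (n / 2 ^ k)) = GB n * denB n :=
    (GB_dvd_prod n).choose_spec
  have hden_dvd : denB n ∣ ∏ k ∈ (Finset.range (n + 1)).filter (fun k => 2 ^ k ≤ n),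
      ((1 : Polynomial ℤ) + X ^ 2 ^ k) ^ (n / 2 ^ k) := ⟨GB n, by rw [hspec]; ring⟩
  have hdne : denB n ≠ 0 := by
    intro h
    rw [h, mul_zero] at hspec
    exact hprodne hspec
  have hg0 : gcd (numB n) (denB n) ≠ 0 := fun h => hdne ((gcd_eq_zero_iff _ _).mp h).2
  have hgu : ¬IsUnit (gcd (numB n) (denB n)) := by
    intro hu
    exact hne (by rw [← _root_.normalize_gcd]; exact normalize_eq_one.mpr hu)
  obtain ⟨q, hqi, hqd⟩ := WfDvdMonoid.exists_irreducible_factor hgu hg0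
  have hqp : Prime q := UniqueFactorizationMonoid.irreducible_iff_prime.mp hqi
  have hq_prod : q ∣ ∏ k ∈ (Finset.range (n + 1)).filter (fun k => 2 ^ k ≤ n),
      ((1 : Polynomial ℤ) + X ^ 2 ^ k) ^ (n / 2 ^ k) :=
    dvd_trans (dvd_trans hqd (gcd_dvd_right _ _)) hden_dvd
  obtain ⟨j, hjF, hjd⟩ := hqp.exists_mem_finset_dvd hq_prod
  have hj2 : q ∣ ((1 : Polynomial ℤ) + X ^ 2 ^ j) := hqp.dvd_of_dvd_pow hjd
  have hirr : Irreducible ((1 : Polynomial ℤ) + X ^ 2 ^ j) := by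
    have h1 : ((1 : Polynomial ℤ) + X ^ 2 ^ j) = Polynomial.cyclotomic (2 ^ (j + 1)) ℤ := by
      rw [Polynomial.cyclotomic_prime_pow_eq_geom_sum Nat.prime_two,
        Finset.sum_range_succ, Finset.sum_range_one]
      simp
    rw [h1]
    exact Polynomial.cyclotomic.irreducible (by positivity)
  have hassoc : Associated q ((1 : Polynomial ℤ) + X ^ 2 ^ j) :=
    hqi.associated_of_dvd hirr hj2
  have hnums : (∑ μ ∈ binParts n, hB n μ) = GB n * numB n := (GB_dvd_sum n).choose_spec
  have hnum_dvd : numB n ∣ ∑ μ ∈ binParts n, hB n μ := ⟨GB n, by rw [hnums]; ring⟩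
  have hp_sum : ((1 : Polynomial ℤ) + X ^ 2 ^ j) ∣ ∑ μ ∈ binParts n, hB n μ :=
    hassoc.symm.dvd.trans (dvd_trans (dvd_trans hqd (gcd_dvd_left _ _)) hnum_dvd)
  obtain ⟨c, hc⟩ := hp_sum
  have hk2 : 2 ^ j ≤ n := (Finset.mem_filter.mp hjF).2
  refine aux_sum_ne n j hk2 ?_
  rw [hc, map_mul]
  have hz : (Polynomial.aeval (Complex.exp ((Real.pi / 2 ^ j : ℝ) * I)))
      ((1 : Polynomial ℤ) + X ^ 2 ^ j) = 0 := by
    rw [map_add, map_one, map_pow, Polynomial.aeval_X, aux_zeta_pow_k]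
    ring
  rw [hz, zero_mul]
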